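/- Let h : ℝ^d × {0,1} → [0,1] be measurable, let b_s := ℙ(S=s), and suppose m_s := E_{X|S=s}[h(X,s)] > 0 for s ∈ {0,1}. Given θ ∈ ℝ define the classifier g_θ by g_θ(x,1) := 1{b_1(2h(x,1)−1) − θ·h(x,1)/m_1 ≥ 0} and g_θ(x,0) := 1{b_0(2h(x,0)−1) + θ·h(x,0)/m_0 ≥ 0}. If E_{X|S=1}[h(X,1)·g_θ(X,1)]/m_1 = E_{X|S=0}[h(X,0)·g_θ(X,0)]/m_0, then 𝔼_{(X,S)}[(2h(X,S)−1)·g_θ(X,S)] = E_{X|S=1}[(b_1(2h(X,1)−1) − θ·h(X,1)/m_1)₊] + E_{X|S=0}[(b_0(2h(X,0)−1) + θ·h(X,0)/m_0)₊]. -/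

import Mathlib

open MeasureTheory ProbabilityTheory Set

theorem stmt_15 {d : ℕ} {Ω : Type*} [MeasurableSpace Ω]
    (P : Measure Ω) [IsProbabilityMeasure P]
    (X : Ω → (Fin d → ℝ)) (S : Ω → Bool)
    (hX : Measurable X) (hS : Measurable S)
    (hSnd : 0 < P {ω | S ω = true} ∧ P {ω | S ω = true} < 1)
    (h : (Fin d → ℝ) → Bool → ℝ)
    (hhm : Measurable (fun p : (Fin d → ℝ) × Bool => h p.1 p.2))
    (hh01 : ∀ x s, h x s ∈ Icc (0:ℝ) 1)
    (b1 b0 m1 m0 : ℝ)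
    (hb1 : b1 = (P {ω | S ω = true}).toReal)
    (hb0 : b0 = (P {ω | S ω = false}).toReal)
    (hm1 : m1 = ∫ ω, h (X ω) true ∂(ProbabilityTheory.cond P {ω | S ω = true}))
    (hm0 : m0 = ∫ ω, h (X ω) false ∂(ProbabilityTheory.cond P {ω | S ω = false}))
    (hm1pos : 0 < m1) (hm0pos : 0 < m0)
    (θ : ℝ)
    (g : (Fin d → ℝ) → Bool → Bool)
    (hg1 : ∀ x, g x true = true ↔ 0 ≤ b1 * (2 * h x true - 1) - θ * h x true / m1)
    (hg0 : ∀ x, g x false = true ↔ 0 ≤ b0 * (2 * h x false - 1) + θ * h x false / m0)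
    (hbal :
      (∫ ω, h (X ω) true * (if g (X ω) true then (1:ℝ) else 0)
          ∂(ProbabilityTheory.cond P {ω | S ω = true})) / m1
        = (∫ ω, h (X ω) false * (if g (X ω) false then (1:ℝ) else 0)
          ∂(ProbabilityTheory.cond P {ω | S ω = false})) / m0) :
    ∫ ω, (2 * h (X ω) (S ω) - 1) * (if g (X ω) (S ω) then (1:ℝ) else 0) ∂P
      = (∫ ω, max (b1 * (2 * h (X ω) true - 1) - θ * h (X ω) true / m1) 0
            ∂(ProbabilityTheory.cond P {ω | S ω = true}))
        + (∫ ω, max (b0 * (2 * h (X ω) false - 1) + θ * h (X ω) false / m0) 0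
            ∂(ProbabilityTheory.cond P {ω | S ω = false})) := by
  classical
  set A : Set Ω := {ω | S ω = true} with hAdef
  have hA : MeasurableSet A := hS (measurableSet_singleton true)
  have hcompl : {ω | S ω = false} = Aᶜ := by
    ext ω; simp [hAdef]
  have PA0 : P A ≠ 0 := hSnd.1.ne'
  have PAc : P Aᶜ = 1 - P A := prob_compl_eq_one_sub hA
  have PAc0 : P Aᶜ ≠ 0 := by
    rw [PAc]
    exact (tsub_pos_iff_lt.mpr hSnd.2).ne'
  haveI hμ1 : IsProbabilityMeasure (P[|A]) := cond_isProbabilityMeasure PA0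
  haveI hμ0 : IsProbabilityMeasure (P[|Aᶜ]) := cond_isProbabilityMeasure PAc0
  -- measurability of component functions
  have hmh : ∀ s, Measurable (fun x => h x s) := fun s =>
    hhm.comp (measurable_id.prodMk measurable_const)
  have hg1m : MeasurableSet {x | g x true = true} := by
    have : {x : Fin d → ℝ | g x true = true}
        = {x | 0 ≤ b1 * (2 * h x true - 1) - θ * h x true / m1} :=
      Set.ext fun x => hg1 x
    rw [this]
    exact measurableSet_le measurable_const (by fun_prop)
  have hg0m : MeasurableSet {x | g x false = true} := by
    have : {x : Fin d → ℝ | g x false = true}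
        = {x | 0 ≤ b0 * (2 * h x false - 1) + θ * h x false / m0} :=
      Set.ext fun x => hg0 x
    rw [this]
    exact measurableSet_le measurable_const (by fun_prop)
  have hind : ∀ s, Measurable (fun x => (if g x s then (1:ℝ) else 0)) := by
    intro s
    cases s
    · exact Measurable.ite hg0m measurable_const measurable_const
    · exact Measurable.ite hg1m measurable_const measurable_const
  -- bounded integrability helper
  have bdd_int : ∀ (μ : Measure Ω) (f : Ω → ℝ) (C : ℝ), IsFiniteMeasure μ →
      Measurable f → (∀ ω, |f ω| ≤ C) → Integrable f μ := by
    intro μ f C hfin hf hb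
    exact Integrable.mono' (integrable_const C) hf.aestronglyMeasurable
      (Filter.Eventually.of_forall fun ω => by simpa using hb ω)
  have habs : ∀ x s, |2 * h x s - 1| ≤ 1 := by
    intro x s
    have h0 := (hh01 x s).1; have h1 := (hh01 x s).2
    rw [abs_le]; constructor <;> linarith
  -- the functions f1, f0, q1, q0
  set f1 : Ω → ℝ := fun ω => (2 * h (X ω) true - 1) * (if g (X ω) true then (1:ℝ) else 0) with hf1
  set f0 : Ω → ℝ := fun ω => (2 * h (X ω) false - 1) * (if g (X ω) false then (1:ℝ) else 0) with hf0
  set q1 : Ω → ℝ := fun ω => h (X ω) true * (if g (X ω) true then (1:ℝ) else 0) with hq1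
  set q0 : Ω → ℝ := fun ω => h (X ω) false * (if g (X ω) false then (1:ℝ) else 0) with hq0
  have hbnd : ∀ s, ∀ ω, |(2 * h (X ω) s - 1) * (if g (X ω) s then (1:ℝ) else 0)| ≤ 1 := by
    intro s ω
    rw [abs_mul]
    calc |2 * h (X ω) s - 1| * |if g (X ω) s then (1:ℝ) else 0|
        ≤ 1 * 1 := by
          apply mul_le_mul (habs _ _) _ (abs_nonneg _) zero_le_one
          split <;> simp
      _ = 1 := one_mul 1
  have hqbnd : ∀ s, ∀ ω, |h (X ω) s * (if g (X ω) s then (1:ℝ) else 0)| ≤ 1 := by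
    intro s ω
    rw [abs_mul]
    calc |h (X ω) s| * |if g (X ω) s then (1:ℝ) else 0|
        ≤ 1 * 1 := by
          apply mul_le_mul _ _ (abs_nonneg _) zero_le_one
          · rw [abs_le]; exact ⟨by linarith [(hh01 (X ω) s).1], (hh01 (X ω) s).2⟩
          · split <;> simp
      _ = 1 := one_mul 1
  have hf1m : Measurable f1 := by
    apply Measurable.mul
    · fun_prop
    · exact (hind true).comp hX
  have hf0m : Measurable f0 := by
    apply Measurable.mul
    · fun_prop
    · exact (hind false).comp hX
  have hq1m : Measurable q1 := ((hmh true).comp hX).mul ((hind true).comp hX)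
  have hq0m : Measurable q0 := ((hmh false).comp hX).mul ((hind false).comp hX)
  -- main integrand measurable
  have hgsetm : MeasurableSet {p : (Fin d → ℝ) × Bool | g p.1 p.2 = true} := by
    have : {p : (Fin d → ℝ) × Bool | g p.1 p.2 = true}
        = ({x | g x true = true} ×ˢ ({true} : Set Bool)) ∪ ({x | g x false = true} ×ˢ ({false} : Set Bool)) := by
      ext ⟨x, s⟩
      cases s <;> simp
    rw [this]
    exact (hg1m.prod (measurableSet_singleton _)).union (hg0m.prod (measurableSet_singleton _))
  have hFm : Measurable (fun ω => (2 * h (X ω) (S ω) - 1) * (if g (X ω) (S ω) then (1:ℝ) else 0)) := by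
    have hcomp : Measurable (fun ω => (X ω, S ω)) := hX.prodMk hS
    have h1 : Measurable (fun p : (Fin d → ℝ) × Bool => 2 * h p.1 p.2 - 1) := by fun_prop
    have h2 : Measurable (fun p : (Fin d → ℝ) × Bool => (if g p.1 p.2 then (1:ℝ) else 0)) :=
      Measurable.ite hgsetm measurable_const measurable_const
    exact ((h1.mul h2).comp hcomp)
  have hfi : Integrable (fun ω => (2 * h (X ω) (S ω) - 1) * (if g (X ω) (S ω) then (1:ℝ) else 0)) P :=
    bdd_int P _ 1 inferInstance hFm (fun ω => hbnd (S ω) ω)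
  -- set integral to cond integral
  have split : ∀ (s : Set Ω), P s ≠ 0 → ∀ f : Ω → ℝ,
      ∫ ω in s, f ω ∂P = (P s).toReal * ∫ ω, f ω ∂(P[|s]) := by
    intro s hs0 f
    rw [ProbabilityTheory.cond, integral_smul_measure, ENNReal.toReal_inv, smul_eq_mul,
      ← mul_assoc, mul_inv_cancel₀, one_mul]
    exact ENNReal.toReal_ne_zero.mpr ⟨hs0, measure_ne_top P s⟩
  -- decompose LHS
  have hdec : ∫ ω, (2 * h (X ω) (S ω) - 1) * (if g (X ω) (S ω) then (1:ℝ) else 0) ∂P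
      = b1 * ∫ ω, f1 ω ∂(P[|A]) + b0 * ∫ ω, f0 ω ∂(P[|Aᶜ]) := by
    rw [← integral_add_compl hA hfi]
    have e1 : ∫ ω in A, (2 * h (X ω) (S ω) - 1) * (if g (X ω) (S ω) then (1:ℝ) else 0) ∂P
        = ∫ ω in A, f1 ω ∂P := by
      apply setIntegral_congr_fun hA
      intro ω hω
      have : S ω = true := hω
      simp only [hf1, this]
    have e0 : ∫ ω in Aᶜ, (2 * h (X ω) (S ω) - 1) * (if g (X ω) (S ω) then (1:ℝ) else 0) ∂P
        = ∫ ω in Aᶜ, f0 ω ∂P := by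
      apply setIntegral_congr_fun hA.compl
      intro ω hω
      have : S ω = false := by
        have : ¬ (S ω = true) := hω
        simpa using this
      simp only [hf0, this]
    rw [e1, e0, split A PA0, split Aᶜ PAc0, hb1, hb0, hcompl]
  -- integrability under cond measures
  have hif1 : Integrable f1 (P[|A]) := bdd_int _ _ 1 inferInstance hf1m (fun ω => hbnd true ω)
  have hiq1 : Integrable q1 (P[|A]) := bdd_int _ _ 1 inferInstance hq1m (fun ω => hqbnd true ω)
  have hif0 : Integrable f0 (P[|Aᶜ]) := bdd_int _ _ 1 inferInstance hf0m (fun ω => hbnd false ω)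
  have hiq0 : Integrable q0 (P[|Aᶜ]) := bdd_int _ _ 1 inferInstance hq0m (fun ω => hqbnd false ω)
  -- pointwise identities for max
  have key1 : ∀ ω, max (b1 * (2 * h (X ω) true - 1) - θ * h (X ω) true / m1) 0
      = b1 * f1 ω - (θ / m1) * q1 ω := by
    intro ω
    simp only [hf1, hq1]
    by_cases hgx : g (X ω) true
    · rw [if_pos hgx, max_eq_left ((hg1 (X ω)).mp hgx)]; ring
    · have hlt : ¬ 0 ≤ b1 * (2 * h (X ω) true - 1) - θ * h (X ω) true / m1 :=
        fun hle => hgx ((hg1 (X ω)).mpr hle)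
      rw [if_neg hgx, max_eq_right (le_of_not_ge hlt)]; ring
  have key0 : ∀ ω, max (b0 * (2 * h (X ω) false - 1) + θ * h (X ω) false / m0) 0
      = b0 * f0 ω + (θ / m0) * q0 ω := by
    intro ω
    simp only [hf0, hq0]
    by_cases hgx : g (X ω) false
    · rw [if_pos hgx, max_eq_left ((hg0 (X ω)).mp hgx)]; ring
    · have hlt : ¬ 0 ≤ b0 * (2 * h (X ω) false - 1) + θ * h (X ω) false / m0 :=
        fun hle => hgx ((hg0 (X ω)).mpr hle)
      rw [if_neg hgx, max_eq_right (le_of_not_ge hlt)]; ring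
  -- compute RHS integrals
  have hR1 : ∫ ω, max (b1 * (2 * h (X ω) true - 1) - θ * h (X ω) true / m1) 0 ∂(P[|A])
      = b1 * ∫ ω, f1 ω ∂(P[|A]) - (θ / m1) * ∫ ω, q1 ω ∂(P[|A]) := by
    rw [show (fun ω => max (b1 * (2 * h (X ω) true - 1) - θ * h (X ω) true / m1) 0)
        = fun ω => b1 * f1 ω - (θ / m1) * q1 ω from funext key1]
    rw [integral_sub (hif1.const_mul b1) (hiq1.const_mul (θ / m1)),
      integral_const_mul, integral_const_mul]
  have hR0 : ∫ ω, max (b0 * (2 * h (X ω) false - 1) + θ * h (X ω) false / m0) 0 ∂(P[|Aᶜ])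
      = b0 * ∫ ω, f0 ω ∂(P[|Aᶜ]) + (θ / m0) * ∫ ω, q0 ω ∂(P[|Aᶜ]) := by
    rw [show (fun ω => max (b0 * (2 * h (X ω) false - 1) + θ * h (X ω) false / m0) 0)
        = fun ω => b0 * f0 ω + (θ / m0) * q0 ω from funext key0]
    rw [integral_add (hif0.const_mul b0) (hiq0.const_mul (θ / m0)),
      integral_const_mul, integral_const_mul]
  -- balance condition cancels θ terms
  have hbal' : (∫ ω, q1 ω ∂(P[|A])) / m1 = (∫ ω, q0 ω ∂(P[|Aᶜ])) / m0 := by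
    simpa [hq1, hq0, hcompl] using hbal
  have hcancel : (θ / m1) * ∫ ω, q1 ω ∂(P[|A]) = (θ / m0) * ∫ ω, q0 ω ∂(P[|Aᶜ]) := by
    have := congrArg (fun t => θ * t) hbal'
    calc (θ / m1) * ∫ ω, q1 ω ∂(P[|A]) = θ * ((∫ ω, q1 ω ∂(P[|A])) / m1) := by ring
      _ = θ * ((∫ ω, q0 ω ∂(P[|Aᶜ])) / m0) := this
      _ = (θ / m0) * ∫ ω, q0 ω ∂(P[|Aᶜ]) := by ring
  rw [hdec, hcompl, hR1, hR0]
  linarith [hcancel]
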